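/- arXiv:hep-ph/9401311 — 2 statements merged into one kernel-verified Lean document; each statement's English description precedes it below -/
import Mathlib

section
/- Let U be an n×n unitary complex matrix with nonzero entries in its first column, and suppose the rows are indexed by n 'fermion-type' labels k = 1,...,n (each fermion type coupling to exactly one doublet, m = n). Define X_i^k = U_{ki}/U_{k1}. If a > 0 is such that |X_i^k| > a for some fixed i ∈ {2,...,n} and all k, then a < √(n−1). -/
/-- If every coupling |X_i^k| = |U_{ki}/U_{k1}| exceeds a > 0 for a fixed column
i ≠ 1 and all rows k of an (n+1)×(n+1) unitary matrix, then a < √n. -/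
theorem stmt_2 (n : ℕ) (U : Matrix (Fin (n + 1)) (Fin (n + 1)) ℂ)
    (hU : U ∈ Matrix.unitaryGroup (Fin (n + 1)) ℂ)
    (h0 : ∀ k : Fin (n + 1), U k 0 ≠ 0)
    (i : Fin (n + 1)) (hi : i ≠ 0)
    (a : ℝ) (ha : 0 < a)
    (hbig : ∀ k : Fin (n + 1), a < ‖U k i / U k 0‖) :
    a < Real.sqrt ((n + 1 : ℝ) - 1) := by
  rcases n with _ | m
  · exact absurd (Fin.fin_one_eq_zero i) hi
  have hstar : star U * U = 1 := hU.1
  have hcol : ∀ j : Fin (m + 2), ∑ k, ‖U k j‖ ^ 2 = 1 := by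
    intro j
    have h1 : (star U * U) j j = 1 := by rw [hstar]; simp
    have h2 : ∑ k, (starRingEnd ℂ) (U k j) * U k j = 1 := by
      rw [Matrix.mul_apply] at h1
      simp only [Matrix.star_apply, RCLike.star_def] at h1
      exact h1
    have heq : ∀ k : Fin (m + 2), (starRingEnd ℂ) (U k j) * U k j
        = ((‖U k j‖ ^ 2 : ℝ) : ℂ) := fun k => by
      rw [mul_comm, Complex.mul_conj, Complex.sq_norm]
    rw [Finset.sum_congr rfl fun k _ => heq k] at h2
    exact_mod_cast h2
  have hterm : ∀ k : Fin (m + 2),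
      a ^ 2 * ‖U k 0‖ ^ 2 < ‖U k i‖ ^ 2 := by
    intro k
    have hk0 : 0 < ‖U k 0‖ := by
      simpa [norm_pos_iff] using (h0 k)
    have h := hbig k
    rw [norm_div] at h
    have h' : a * ‖U k 0‖ < ‖U k i‖ := by
      rw [lt_div_iff₀ hk0] at h; exact h
    have := mul_self_lt_mul_self (by positivity) h'
    nlinarith
  have hsum : a ^ 2 * (∑ k, ‖U k 0‖ ^ 2) < ∑ k, ‖U k i‖ ^ 2 := by
    rw [Finset.mul_sum]
    exact Finset.sum_lt_sum_of_nonempty Finset.univ_nonempty fun k _ => hterm k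
  rw [hcol 0, hcol i, mul_one] at hsum
  have ha1 : a < 1 := by nlinarith
  have : (1 : ℝ) ≤ Real.sqrt ((m + 1 + 1 : ℝ) - 1) := by
    rw [Real.one_le_sqrt] <;> linarith
  push_cast at this ⊢
  linarith
end

section
/- The interference phase-space function F_ps^int(x) = 1 + 9x − 9x² − x³ + 6x(1+x)·ln(x) satisfies F_ps^int(x) > 0 for all x ∈ (0,1), with F_ps^int(1) = 0 and lim_{x→0⁺} F_ps^int(x) = 1. -/
open Real Filter

private lemma hasDerivAt_u {x : ℝ} (hx : 0 < x) :
    HasDerivAt (fun x : ℝ => 12 * Real.log x + 6 / x - 6 * x)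
      (12 / x - 6 / x ^ 2 - 6) x := by
  have h1 : HasDerivAt (fun x : ℝ => Real.log x) (1 / x) x := by
    simpa [one_div] using Real.hasDerivAt_log hx.ne'
  have h2 : HasDerivAt (fun x : ℝ => 6 / x) (-6 / x ^ 2) x := by
    have h := (hasDerivAt_inv hx.ne').const_mul (6 : ℝ)
    convert! h using 1
    ring
  have h3 : HasDerivAt (fun x : ℝ => 6 * x) 6 x := by
    simpa using (hasDerivAt_id x).const_mul (6 : ℝ)
  have := ((h1.const_mul 12).fun_add h2).fun_sub h3
  convert! this using 1
  field_simp
  ring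

private lemma hasDerivAt_v {x : ℝ} (hx : 0 < x) :
    HasDerivAt (fun x : ℝ => 15 - 12 * x - 3 * x ^ 2 + 6 * (1 + 2 * x) * Real.log x)
      (12 * Real.log x + 6 / x - 6 * x) x := by
  have hlog : HasDerivAt (fun x : ℝ => Real.log x) (1 / x) x := by
    simpa [one_div] using Real.hasDerivAt_log hx.ne'
  have hp : HasDerivAt (fun x : ℝ => 15 - 12 * x - 3 * x ^ 2) (-12 - 3 * (2 * x)) x := by
    have h1 : HasDerivAt (fun x : ℝ => 12 * x) 12 x := by
      simpa using (hasDerivAt_id x).const_mul (12 : ℝ)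
    have h2 : HasDerivAt (fun x : ℝ => 3 * x ^ 2) (3 * (2 * x)) x := by
      simpa using ((hasDerivAt_pow 2 x)).const_mul (3 : ℝ)
    simpa using ((hasDerivAt_const x (15 : ℝ)).fun_sub h1).fun_sub h2
  have hq : HasDerivAt (fun x : ℝ => 6 * (1 + 2 * x)) 12 x := by
    have : HasDerivAt (fun x : ℝ => 1 + 2 * x) 2 x := by
      simpa using (hasDerivAt_const x (1 : ℝ)).fun_add ((hasDerivAt_id x).const_mul (2 : ℝ))
    have := this.const_mul (6 : ℝ)
    norm_num at this
    exact this
  have := hp.fun_add (hq.fun_mul hlog)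
  convert! this using 1
  field_simp
  ring

private lemma hasDerivAt_f {x : ℝ} (hx : 0 < x) :
    HasDerivAt (fun x : ℝ => 1 + 9 * x - 9 * x ^ 2 - x ^ 3 + 6 * x * (1 + x) * Real.log x)
      (15 - 12 * x - 3 * x ^ 2 + 6 * (1 + 2 * x) * Real.log x) x := by
  have hlog : HasDerivAt (fun x : ℝ => Real.log x) (1 / x) x := by
    simpa [one_div] using Real.hasDerivAt_log hx.ne'
  have hp : HasDerivAt (fun x : ℝ => 1 + 9 * x - 9 * x ^ 2 - x ^ 3)
      (9 - 9 * (2 * x) - 3 * x ^ 2) x := by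
    have h1 : HasDerivAt (fun x : ℝ => 9 * x) 9 x := by
      simpa using (hasDerivAt_id x).const_mul (9 : ℝ)
    have h2 : HasDerivAt (fun x : ℝ => 9 * x ^ 2) (9 * (2 * x)) x := by
      simpa using (hasDerivAt_pow 2 x).const_mul (9 : ℝ)
    have h3 : HasDerivAt (fun x : ℝ => x ^ 3) (3 * x ^ 2) x := by
      simpa using hasDerivAt_pow 3 x
    simpa using (((hasDerivAt_const x (1 : ℝ)).fun_add h1).fun_sub h2).fun_sub h3
  have hq : HasDerivAt (fun x : ℝ => 6 * x * (1 + x)) (6 * (1 + x) + 6 * x) x := by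
    have h1 : HasDerivAt (fun x : ℝ => 6 * x) 6 x := by
      simpa using (hasDerivAt_id x).const_mul (6 : ℝ)
    have h2 : HasDerivAt (fun x : ℝ => 1 + x) 1 x := by
      simpa using (hasDerivAt_const x (1 : ℝ)).fun_add (hasDerivAt_id x)
    simpa [mul_comm] using h1.fun_mul h2
  have := hp.fun_add (hq.fun_mul hlog)
  convert! this using 1
  field_simp
  ring

/-- The interference phase-space function F_ps^int(x) = 1 + 9x - 9x² - x³
+ 6x(1+x) ln x is positive on (0,1), vanishes at 1, and tends to 1 at 0⁺. -/
theorem stmt_13 :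
    (∀ x ∈ Set.Ioo (0 : ℝ) 1,
      0 < 1 + 9 * x - 9 * x ^ 2 - x ^ 3 + 6 * x * (1 + x) * Real.log x) ∧
    (1 + 9 * (1 : ℝ) - 9 * 1 ^ 2 - 1 ^ 3 + 6 * 1 * (1 + 1) * Real.log 1) = 0 ∧
    Tendsto
      (fun x : ℝ => 1 + 9 * x - 9 * x ^ 2 - x ^ 3 + 6 * x * (1 + x) * Real.log x)
      (nhdsWithin 0 (Set.Ioi 0)) (nhds 1) := by
  refine ⟨?_, by norm_num, ?_⟩
  · -- positivity on (0,1)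
    set u : ℝ → ℝ := fun x => 12 * Real.log x + 6 / x - 6 * x with hu_def
    set v : ℝ → ℝ := fun x => 15 - 12 * x - 3 * x ^ 2 + 6 * (1 + 2 * x) * Real.log x
      with hv_def
    set f : ℝ → ℝ := fun x => 1 + 9 * x - 9 * x ^ 2 - x ^ 3 + 6 * x * (1 + x) * Real.log x
      with hf_def
    have hIoc : Convex ℝ (Set.Ioc (0 : ℝ) 1) := convex_Ioc 0 1
    have hint : interior (Set.Ioc (0 : ℝ) 1) = Set.Ioo 0 1 := interior_Ioc
    -- u > 0 on (0,1)
    have hu_anti : StrictAntiOn u (Set.Ioc (0 : ℝ) 1) := by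
      apply strictAntiOn_of_deriv_neg hIoc
      · exact fun x hx => (hasDerivAt_u hx.1).continuousAt.continuousWithinAt
      · intro x hx
        rw [hint] at hx
        rw [(hasDerivAt_u hx.1).deriv]
        have h1 : (0:ℝ) < x ^ 2 := pow_pos hx.1 2
        have he : 12 / x - 6 / x ^ 2 - 6 = -(6 * (x - 1) ^ 2) / x ^ 2 := by
          field_simp [hx.1.ne']; ring
        rw [he]
        apply div_neg_of_neg_of_pos _ h1
        have hne : x - 1 ≠ 0 := sub_ne_zero.mpr (ne_of_lt hx.2)
        have h2 : (0:ℝ) < (x - 1) ^ 2 := pow_two_pos_of_ne_zero hne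
        linarith
    have hu_pos : ∀ x ∈ Set.Ioo (0:ℝ) 1, 0 < u x := by
      intro x hx
      have h := hu_anti ⟨hx.1, hx.2.le⟩ (Set.mem_Ioc.mpr ⟨one_pos, le_refl 1⟩) hx.2
      have hu1 : u 1 = 0 := by simp [hu_def]
      rw [hu1] at h
      exact h
    -- v < 0 on (0,1)
    have hv_mono : StrictMonoOn v (Set.Ioc (0 : ℝ) 1) := by
      apply strictMonoOn_of_deriv_pos hIoc
      · exact fun x hx => (hasDerivAt_v hx.1).continuousAt.continuousWithinAt
      · intro x hx
        rw [hint] at hx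
        rw [(hasDerivAt_v hx.1).deriv]
        exact hu_pos x hx
    have hv_neg : ∀ x ∈ Set.Ioo (0:ℝ) 1, v x < 0 := by
      intro x hx
      have h := hv_mono ⟨hx.1, hx.2.le⟩ (Set.mem_Ioc.mpr ⟨one_pos, le_refl 1⟩) hx.2
      have hv1 : v 1 = 0 := by norm_num [hv_def, Real.log_one]
      rw [hv1] at h
      exact h
    -- f > 0 on (0,1)
    have hf_anti : StrictAntiOn f (Set.Ioc (0 : ℝ) 1) := by
      apply strictAntiOn_of_deriv_neg hIoc
      · exact fun x hx => (hasDerivAt_f hx.1).continuousAt.continuousWithinAt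
      · intro x hx
        rw [hint] at hx
        rw [(hasDerivAt_f hx.1).deriv]
        exact hv_neg x hx
    intro x hx
    have h := hf_anti ⟨hx.1, hx.2.le⟩ (Set.mem_Ioc.mpr ⟨one_pos, le_refl 1⟩) hx.2
    have hf1 : f 1 = 0 := by norm_num [hf_def, Real.log_one]
    rw [hf1] at h
    exact h
  · -- limit at 0⁺
    have heq : (fun x : ℝ => 1 + 9 * x - 9 * x ^ 2 - x ^ 3 + 6 * x * (1 + x) * Real.log x)
        = fun x : ℝ => 1 + 9 * x - 9 * x ^ 2 - x ^ 3 + 6 * (1 + x) * (x * Real.log x) := by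
      funext x; ring
    rw [heq]
    have hcont : Continuous fun x : ℝ =>
        1 + 9 * x - 9 * x ^ 2 - x ^ 3 + 6 * (1 + x) * (x * Real.log x) := by
      have hml : Continuous fun x : ℝ => x * Real.log x := Real.continuous_mul_log
      fun_prop
    have h0 : (1 : ℝ) + 9 * 0 - 9 * 0 ^ 2 - 0 ^ 3 + 6 * (1 + 0) * (0 * Real.log 0) = 1 := by
      norm_num
    have h := (hcont.tendsto 0).mono_left (nhdsWithin_le_nhds (s := Set.Ioi (0:ℝ)))
    rw [h0] at h
    exact h
end
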